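/- Let J₁ = −1/2, J₂ = (1+√2)/2, J₃ = √2/2, and set E₀ := −1 − √2, E₁ := 0, E₂ := 1, E₃ := √2, E₄ := (10 + √2)/8. Define D : [E₀, E₄] → ℝ piecewise by D(ε) := 3/(2√2) − √((10+√2)/8 − ε)/√(2+√2) for E₀ ≤ ε ≤ E₁; D(ε) := √2 − 1 for E₁ ≤ ε ≤ E₂; D(ε) := √((10+√2)/8 − ε)/√(2+√2) + 3/(2√2) − 1 for E₂ ≤ ε ≤ E₃; and D(ε) := √(4 − 2√2)·√((10+√2)/8 − ε) for E₃ ≤ ε ≤ E₄. Then ∫_{E₀}^{E₄} D(ε) dε = 1, ∫_{E₀}^{E₄} ε·D(ε) dε = 0, and ∫_{E₀}^{E₄} ε²·D(ε) dε = (3 + √2)/6. -/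

import Mathlib

/-- The normalized density of states of the classical spin triangle for the standard
couplings `J₁ = −1/2`, `J₂ = (1+√2)/2`, `J₃ = √2/2`, on `[E₀, E₄] = [−1−√2, (10+√2)/8]`,
with breakpoints `E₁ = 0`, `E₂ = 1`, `E₃ = √2`. -/
noncomputable def dosStandard (ε : ℝ) : ℝ :=
  if ε ≤ 0 then
    3 / (2 * Real.sqrt 2)
      - Real.sqrt ((10 + Real.sqrt 2) / 8 - ε) / Real.sqrt (2 + Real.sqrt 2)
  else if ε ≤ 1 then
    Real.sqrt 2 - 1
  else if ε ≤ Real.sqrt 2 then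
    Real.sqrt ((10 + Real.sqrt 2) / 8 - ε) / Real.sqrt (2 + Real.sqrt 2)
      + 3 / (2 * Real.sqrt 2) - 1
  else
    Real.sqrt (4 - 2 * Real.sqrt 2) * Real.sqrt ((10 + Real.sqrt 2) / 8 - ε)

section dosAux
open intervalIntegral MeasureTheory

private lemma pow_mul_sqrt (n : ℕ) (x : ℝ) : x ^ n * Real.sqrt x = x ^ ((n : ℝ) + 1/2) := by
  rcases lt_trichotomy x 0 with hx | rfl | hx
  · rw [Real.sqrt_eq_zero_of_nonpos hx.le, mul_zero, Real.rpow_def_of_neg hx,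
      show ((n:ℝ) + 1/2) * Real.pi = n * Real.pi + Real.pi/2 by ring,
      Real.cos_add_pi_div_two, Real.sin_nat_mul_pi, neg_zero, mul_zero]
  · rw [Real.sqrt_zero, mul_zero, Real.zero_rpow (by positivity : (0:ℝ) < (n:ℝ)+1/2).ne']
  · rw [Real.rpow_add hx, Real.rpow_natCast, Real.sqrt_eq_rpow]

private lemma contPS (n : ℕ) (c : ℝ) :
    Continuous fun ε : ℝ => (c - ε) ^ n * Real.sqrt (c - ε) := by
  have h : Continuous fun ε : ℝ => c - ε := continuous_const.sub continuous_id
  exact (h.pow n).mul (Real.continuous_sqrt.comp h)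

private lemma contS (c : ℝ) : Continuous fun ε : ℝ => Real.sqrt (c - ε) :=
  Real.continuous_sqrt.comp (continuous_const.sub continuous_id)

private lemma integral_pow_sqrt (n : ℕ) (c a b : ℝ) :
    ∫ ε in a..b, (c - ε) ^ n * Real.sqrt (c - ε)
      = (2/(2*(n:ℝ)+3)) * ((c-a)^(n+1) * Real.sqrt (c-a) - (c-b)^(n+1) * Real.sqrt (c-b)) := by
  have hne : (2*(n:ℝ)+3) ≠ 0 := by positivity
  have hd : ∀ x ∈ Set.uIcc a b,
      HasDerivAt (fun ε : ℝ => -(2/(2*(n:ℝ)+3)) * (c - ε) ^ ((n:ℝ) + 3/2))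
        ((c - x) ^ n * Real.sqrt (c - x)) x := by
    intro x _
    have h1 : HasDerivAt (fun ε : ℝ => c - ε) (-1) x := by
      simpa using (hasDerivAt_id x).const_sub c
    have h2 : HasDerivAt (fun y : ℝ => y ^ ((n:ℝ)+3/2))
        (((n:ℝ)+3/2) * (c-x) ^ ((n:ℝ)+3/2-1)) (c-x) :=
      Real.hasDerivAt_rpow_const (Or.inr (by have : (0:ℝ) ≤ (n:ℝ) := Nat.cast_nonneg n; linarith))
    have h3 := (h2.comp x h1).const_mul (-(2/(2*(n:ℝ)+3)))
    refine h3.congr_deriv ?_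
    rw [pow_mul_sqrt, show (n:ℝ)+3/2-1 = (n:ℝ)+1/2 by ring]
    field_simp
  rw [intervalIntegral.integral_eq_sub_of_hasDerivAt hd ((contPS n c).intervalIntegrable a b)]
  have e : ∀ y : ℝ, y ^ ((n:ℝ)+3/2) = y ^ (n+1) * Real.sqrt y := by
    intro y
    rw [pow_mul_sqrt (n+1) y]
    congr 1
    push_cast; ring
  rw [e, e]; ring

private lemma sqrtInt0 (c a b : ℝ) :
    ∫ ε in a..b, Real.sqrt (c - ε)
      = 2/3 * ((c-a) * Real.sqrt (c-a) - (c-b) * Real.sqrt (c-b)) := by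
  have h := integral_pow_sqrt 0 c a b
  simpa using h

private lemma sqrtInt1 (c a b : ℝ) :
    ∫ ε in a..b, ε * Real.sqrt (c - ε)
      = 2/3 * c * ((c-a) * Real.sqrt (c-a) - (c-b) * Real.sqrt (c-b))
        - 2/5 * ((c-a)^2 * Real.sqrt (c-a) - (c-b)^2 * Real.sqrt (c-b)) := by
  have h : ∀ x : ℝ, x ∈ Set.uIcc a b → x * Real.sqrt (c - x)
      = c * ((c-x)^0 * Real.sqrt (c-x)) - (c-x)^1 * Real.sqrt (c-x) := by
    intro x _; ring
  rw [intervalIntegral.integral_congr h, intervalIntegral.integral_sub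
      (f := fun x => c * ((c-x)^0 * Real.sqrt (c-x))) (g := fun x => (c-x)^1 * Real.sqrt (c-x))
      ((continuous_const.mul (contPS 0 c) : Continuous _).intervalIntegrable a b)
      ((contPS 1 c).intervalIntegrable a b),
    intervalIntegral.integral_const_mul, integral_pow_sqrt, integral_pow_sqrt]
  norm_num
  ring

private lemma sqrtInt2 (c a b : ℝ) :
    ∫ ε in a..b, ε^2 * Real.sqrt (c - ε)
      = 2/3 * c^2 * ((c-a) * Real.sqrt (c-a) - (c-b) * Real.sqrt (c-b))
        - 4/5 * c * ((c-a)^2 * Real.sqrt (c-a) - (c-b)^2 * Real.sqrt (c-b))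
        + 2/7 * ((c-a)^3 * Real.sqrt (c-a) - (c-b)^3 * Real.sqrt (c-b)) := by
  have h : ∀ x : ℝ, x ∈ Set.uIcc a b → x^2 * Real.sqrt (c - x)
      = c^2 * ((c-x)^0 * Real.sqrt (c-x))
        - (2*c) * ((c-x)^1 * Real.sqrt (c-x)) + (c-x)^2 * Real.sqrt (c-x) := by
    intro x _; ring
  rw [intervalIntegral.integral_congr h, intervalIntegral.integral_add
      (f := fun x => c^2 * ((c-x)^0 * Real.sqrt (c-x)) - (2*c) * ((c-x)^1 * Real.sqrt (c-x)))
      (g := fun x => (c-x)^2 * Real.sqrt (c-x))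
      (IntervalIntegrable.sub ((continuous_const.mul (contPS 0 c) : Continuous _).intervalIntegrable a b)
        ((continuous_const.mul (contPS 1 c) : Continuous _).intervalIntegrable a b))
      ((contPS 2 c).intervalIntegrable a b),
    intervalIntegral.integral_sub (f := fun x => c^2 * ((c-x)^0 * Real.sqrt (c-x)))
      (g := fun x => (2*c) * ((c-x)^1 * Real.sqrt (c-x))) ((continuous_const.mul (contPS 0 c) : Continuous _).intervalIntegrable a b)
      ((continuous_const.mul (contPS 1 c) : Continuous _).intervalIntegrable a b),
    intervalIntegral.integral_const_mul, intervalIntegral.integral_const_mul,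
    integral_pow_sqrt, integral_pow_sqrt, integral_pow_sqrt]
  norm_num
  ring

private lemma hr0 : (0:ℝ) < Real.sqrt 2 := Real.sqrt_pos.2 (by norm_num)
private lemma hr2 : Real.sqrt 2 ^ 2 = 2 := Real.sq_sqrt (by norm_num)
private lemma hr_ge1 : (1:ℝ) ≤ Real.sqrt 2 := by nlinarith [hr2, hr0]
private lemma ht2pos : (0:ℝ) < 2 + Real.sqrt 2 := by linarith [hr0]
private lemma ht0 : (0:ℝ) < Real.sqrt (2 + Real.sqrt 2) := Real.sqrt_pos.2 ht2pos

private lemma sqrt_div_t {X q : ℝ} (hq : 0 ≤ q) (h : X = (q * Real.sqrt (2 + Real.sqrt 2))^2) :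
    Real.sqrt X / Real.sqrt (2 + Real.sqrt 2) = q := by
  rw [h, Real.sqrt_sq (by positivity), mul_div_assoc, div_self ht0.ne', mul_one]

private lemma hq0 : Real.sqrt ((10 + Real.sqrt 2)/8 - (-1 - Real.sqrt 2)) / Real.sqrt (2 + Real.sqrt 2)
    = 3/4 * Real.sqrt 2 := by
  refine sqrt_div_t (by positivity) ?_
  rw [mul_pow, Real.sq_sqrt ht2pos.le]
  linear_combination (-(9:ℝ)/8 - 9/16 * Real.sqrt 2) * hr2

private lemma hqz : Real.sqrt ((10 + Real.sqrt 2)/8 - 0) / Real.sqrt (2 + Real.sqrt 2)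
    = (4 - Real.sqrt 2) / 4 := by
  refine sqrt_div_t (by nlinarith [hr2, hr0]) ?_
  rw [mul_pow, Real.sq_sqrt ht2pos.le]
  linear_combination ((3:ℝ)/8 - 1/16 * Real.sqrt 2) * hr2

private lemma hq1 : Real.sqrt ((10 + Real.sqrt 2)/8 - 1) / Real.sqrt (2 + Real.sqrt 2)
    = Real.sqrt 2 / 4 := by
  refine sqrt_div_t (by positivity) ?_
  rw [mul_pow, Real.sq_sqrt ht2pos.le]
  linear_combination (-(1:ℝ)/8 - 1/16 * Real.sqrt 2) * hr2

private lemma hqr : Real.sqrt ((10 + Real.sqrt 2)/8 - Real.sqrt 2) / Real.sqrt (2 + Real.sqrt 2)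
    = (3 * Real.sqrt 2 - 4) / 4 := by
  refine sqrt_div_t (by nlinarith [hr2, hr0]) ?_
  rw [mul_pow, Real.sq_sqrt ht2pos.le]
  linear_combination ((3:ℝ)/8 - 9/16 * Real.sqrt 2) * hr2

private lemma hwr : Real.sqrt (4 - 2 * Real.sqrt 2) * Real.sqrt ((10 + Real.sqrt 2)/8 - Real.sqrt 2)
    = (3 * Real.sqrt 2 - 4) / 2 := by
  rw [← Real.sqrt_mul (by nlinarith [hr2, hr0])]
  rw [show (4 - 2*Real.sqrt 2) * ((10 + Real.sqrt 2)/8 - Real.sqrt 2)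
      = ((3 * Real.sqrt 2 - 4)/2)^2 by linear_combination (-(1:ℝ)/2) * hr2]
  exact Real.sqrt_sq (by nlinarith [hr2, hr0])

private lemma hA : 3 / (2 * Real.sqrt 2) = 3/4 * Real.sqrt 2 := by
  rw [div_eq_iff (by positivity)]
  linear_combination (-(3:ℝ)/2) * hr2

private lemma piece_congr {f g : ℝ → ℝ} {a b : ℝ} (hab : a ≤ b)
    (h : ∀ x ∈ Set.Ioc a b, f x = g x) :
    ∫ x in a..b, f x = ∫ x in a..b, g x := by
  rw [intervalIntegral.integral_of_le hab, intervalIntegral.integral_of_le hab]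
  exact MeasureTheory.setIntegral_congr_fun measurableSet_Ioc h

private lemma piece_integrable {f g : ℝ → ℝ} {a b : ℝ} (hab : a ≤ b) (hg : Continuous g)
    (h : ∀ x ∈ Set.Ioc a b, f x = g x) : IntervalIntegrable f MeasureTheory.volume a b := by
  rw [intervalIntegrable_iff_integrableOn_Ioc_of_le hab]
  exact (hg.integrableOn_Ioc).congr_fun (fun x hx => (h x hx).symm) measurableSet_Ioc

private lemma hEq1 : ∀ x ∈ Set.Ioc (-1 - Real.sqrt 2) (0:ℝ), dosStandard x
    = 3/4 * Real.sqrt 2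
      - Real.sqrt ((10 + Real.sqrt 2)/8 - x) / Real.sqrt (2 + Real.sqrt 2) := by
  intro x hx
  rw [dosStandard, if_pos hx.2, hA]

private lemma hEq2 : ∀ x ∈ Set.Ioc (0:ℝ) 1, dosStandard x = Real.sqrt 2 - 1 := by
  intro x hx
  rw [dosStandard, if_neg (not_le.2 hx.1), if_pos hx.2]

private lemma hEq3 : ∀ x ∈ Set.Ioc (1:ℝ) (Real.sqrt 2), dosStandard x
    = Real.sqrt ((10 + Real.sqrt 2)/8 - x) / Real.sqrt (2 + Real.sqrt 2)
      + 3/4 * Real.sqrt 2 - 1 := by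
  intro x hx
  rw [dosStandard, if_neg (not_le.2 (show (0:ℝ) < x by linarith [hx.1])),
    if_neg (not_le.2 hx.1), if_pos hx.2, hA]

private lemma hEq4 : ∀ x ∈ Set.Ioc (Real.sqrt 2) ((10 + Real.sqrt 2)/8), dosStandard x
    = Real.sqrt (4 - 2 * Real.sqrt 2) * Real.sqrt ((10 + Real.sqrt 2)/8 - x) := by
  intro x hx
  have h1 : (1:ℝ) < x := lt_of_le_of_lt hr_ge1 hx.1
  rw [dosStandard, if_neg (not_le.2 (show (0:ℝ) < x by linarith)),
    if_neg (not_le.2 h1), if_neg (not_le.2 hx.1)]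

private lemma div_t_0 (c a b T : ℝ) :
    (2/3 * ((c-a) * Real.sqrt (c-a) - (c-b) * Real.sqrt (c-b))) / T
      = 2/3 * ((c-a) * (Real.sqrt (c-a)/T) - (c-b) * (Real.sqrt (c-b)/T)) := by ring
private lemma div_t_1 (c a b T : ℝ) :
    (2/3 * c * ((c-a) * Real.sqrt (c-a) - (c-b) * Real.sqrt (c-b))
      - 2/5 * ((c-a)^2 * Real.sqrt (c-a) - (c-b)^2 * Real.sqrt (c-b))) / T
      = 2/3 * c * ((c-a) * (Real.sqrt (c-a)/T) - (c-b) * (Real.sqrt (c-b)/T))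
        - 2/5 * ((c-a)^2 * (Real.sqrt (c-a)/T) - (c-b)^2 * (Real.sqrt (c-b)/T)) := by ring
private lemma div_t_2 (c a b T : ℝ) :
    (2/3 * c^2 * ((c-a) * Real.sqrt (c-a) - (c-b) * Real.sqrt (c-b))
      - 4/5 * c * ((c-a)^2 * Real.sqrt (c-a) - (c-b)^2 * Real.sqrt (c-b))
      + 2/7 * ((c-a)^3 * Real.sqrt (c-a) - (c-b)^3 * Real.sqrt (c-b))) / T
      = 2/3 * c^2 * ((c-a) * (Real.sqrt (c-a)/T) - (c-b) * (Real.sqrt (c-b)/T))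
        - 4/5 * c * ((c-a)^2 * (Real.sqrt (c-a)/T) - (c-b)^2 * (Real.sqrt (c-b)/T))
        + 2/7 * ((c-a)^3 * (Real.sqrt (c-a)/T) - (c-b)^3 * (Real.sqrt (c-b)/T)) := by ring
private lemma mul_w_0 (c a b W : ℝ) :
    W * (2/3 * ((c-a) * Real.sqrt (c-a) - (c-b) * Real.sqrt (c-b)))
      = 2/3 * ((c-a) * (W * Real.sqrt (c-a)) - (c-b) * (W * Real.sqrt (c-b))) := by ring
private lemma mul_w_1 (c a b W : ℝ) :
    W * (2/3 * c * ((c-a) * Real.sqrt (c-a) - (c-b) * Real.sqrt (c-b))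
        - 2/5 * ((c-a)^2 * Real.sqrt (c-a) - (c-b)^2 * Real.sqrt (c-b)))
      = 2/3 * c * ((c-a) * (W * Real.sqrt (c-a)) - (c-b) * (W * Real.sqrt (c-b)))
        - 2/5 * ((c-a)^2 * (W * Real.sqrt (c-a)) - (c-b)^2 * (W * Real.sqrt (c-b))) := by ring
private lemma mul_w_2 (c a b W : ℝ) :
    W * (2/3 * c^2 * ((c-a) * Real.sqrt (c-a) - (c-b) * Real.sqrt (c-b))
        - 4/5 * c * ((c-a)^2 * Real.sqrt (c-a) - (c-b)^2 * Real.sqrt (c-b))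
        + 2/7 * ((c-a)^3 * Real.sqrt (c-a) - (c-b)^3 * Real.sqrt (c-b)))
      = 2/3 * c^2 * ((c-a) * (W * Real.sqrt (c-a)) - (c-b) * (W * Real.sqrt (c-b)))
        - 4/5 * c * ((c-a)^2 * (W * Real.sqrt (c-a)) - (c-b)^2 * (W * Real.sqrt (c-b)))
        + 2/7 * ((c-a)^3 * (W * Real.sqrt (c-a)) - (c-b)^3 * (W * Real.sqrt (c-b))) := by ring

private lemma P10 : (∫ ε in (-1 - Real.sqrt 2)..(0:ℝ),
      (3/4 * Real.sqrt 2 - Real.sqrt ((10 + Real.sqrt 2)/8 - ε) / Real.sqrt (2 + Real.sqrt 2)))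
    = 7/6 - Real.sqrt 2 / 2 := by
  rw [intervalIntegral.integral_sub intervalIntegrable_const
      (((contS _).div_const _).intervalIntegrable _ _),
    intervalIntegral.integral_div, sqrtInt0, intervalIntegral.integral_const, smul_eq_mul,
    div_t_0, hq0, hqz]
  linear_combination (1/6 : ℝ) * hr2

private lemma P11 : (∫ ε in (-1 - Real.sqrt 2)..(0:ℝ),
      ε * (3/4 * Real.sqrt 2 - Real.sqrt ((10 + Real.sqrt 2)/8 - ε) / Real.sqrt (2 + Real.sqrt 2)))
    = 7/30 - 5/12 * Real.sqrt 2 := by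
  rw [intervalIntegral.integral_congr (g := fun ε =>
      3/4 * Real.sqrt 2 * ε - (ε * Real.sqrt ((10 + Real.sqrt 2)/8 - ε)) / Real.sqrt (2 + Real.sqrt 2))
      (fun x _ => by ring),
    intervalIntegral.integral_sub (f := fun ε => 3/4 * Real.sqrt 2 * ε)
      (g := fun ε => (ε * Real.sqrt ((10 + Real.sqrt 2)/8 - ε)) / Real.sqrt (2 + Real.sqrt 2))
      ((continuous_const.mul continuous_id :
        Continuous fun x : ℝ => 3/4 * Real.sqrt 2 * x).intervalIntegrable _ _)
      (((continuous_id'.mul (contS _)).div_const _).intervalIntegrable _ _),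
    intervalIntegral.integral_const_mul, integral_id,
    intervalIntegral.integral_div, sqrtInt1, div_t_1, hq0, hqz]
  linear_combination (-(11:ℝ)/120 - 1/15 * Real.sqrt 2) * hr2

private lemma P12 : (∫ ε in (-1 - Real.sqrt 2)..(0:ℝ),
      ε^2 * (3/4 * Real.sqrt 2 - Real.sqrt ((10 + Real.sqrt 2)/8 - ε) / Real.sqrt (2 + Real.sqrt 2)))
    = 13/28 - 13/420 * Real.sqrt 2 := by
  rw [intervalIntegral.integral_congr (g := fun ε =>
      3/4 * Real.sqrt 2 * ε^2 - (ε^2 * Real.sqrt ((10 + Real.sqrt 2)/8 - ε)) / Real.sqrt (2 + Real.sqrt 2))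
      (fun x _ => by ring),
    intervalIntegral.integral_sub (f := fun ε => 3/4 * Real.sqrt 2 * ε^2)
      (g := fun ε => (ε^2 * Real.sqrt ((10 + Real.sqrt 2)/8 - ε)) / Real.sqrt (2 + Real.sqrt 2))
      ((continuous_const.mul (continuous_pow 2) :
        Continuous fun x : ℝ => 3/4 * Real.sqrt 2 * x^2).intervalIntegrable _ _)
      ((((continuous_pow 2).mul (contS _)).div_const _).intervalIntegrable _ _),
    intervalIntegral.integral_const_mul, integral_pow,
    intervalIntegral.integral_div, sqrtInt2, div_t_2, hq0, hqz]
  push_cast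
  linear_combination ((1:ℝ)/12 + 89/1680 * Real.sqrt 2 + 13/420 * Real.sqrt 2^2) * hr2

private lemma P20 : (∫ _ε in (0:ℝ)..(1:ℝ), (Real.sqrt 2 - 1)) = Real.sqrt 2 - 1 := by
  rw [intervalIntegral.integral_const, smul_eq_mul]; ring

private lemma P21 : (∫ ε in (0:ℝ)..(1:ℝ), ε * (Real.sqrt 2 - 1)) = (Real.sqrt 2 - 1)/2 := by
  rw [intervalIntegral.integral_congr (g := fun ε => (Real.sqrt 2 - 1) * ε) (fun x _ => by ring),
    intervalIntegral.integral_const_mul, integral_id]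
  ring

private lemma P22 : (∫ ε in (0:ℝ)..(1:ℝ), ε^2 * (Real.sqrt 2 - 1)) = (Real.sqrt 2 - 1)/3 := by
  rw [intervalIntegral.integral_congr (g := fun ε => (Real.sqrt 2 - 1) * ε^2) (fun x _ => by ring),
    intervalIntegral.integral_const_mul, integral_pow]
  push_cast; ring

private lemma P30 : (∫ ε in (1:ℝ)..(Real.sqrt 2),
      (Real.sqrt ((10 + Real.sqrt 2)/8 - ε) / Real.sqrt (2 + Real.sqrt 2) + 3/4 * Real.sqrt 2 - 1))
    = 17/4 - 35/12 * Real.sqrt 2 := by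
  rw [intervalIntegral.integral_congr (g := fun ε =>
      Real.sqrt ((10 + Real.sqrt 2)/8 - ε) / Real.sqrt (2 + Real.sqrt 2) + (3/4 * Real.sqrt 2 - 1))
      (fun x _ => by ring),
    intervalIntegral.integral_add (((contS _).div_const _).intervalIntegrable _ _)
      intervalIntegrable_const,
    intervalIntegral.integral_div, sqrtInt0, intervalIntegral.integral_const, smul_eq_mul,
    div_t_0, hq1, hqr]
  linear_combination ((29:ℝ)/24) * hr2

private lemma P31 : (∫ ε in (1:ℝ)..(Real.sqrt 2),
      ε * (Real.sqrt ((10 + Real.sqrt 2)/8 - ε) / Real.sqrt (2 + Real.sqrt 2) + 3/4 * Real.sqrt 2 - 1))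
    = -7/6 + 223/240 * Real.sqrt 2 := by
  rw [intervalIntegral.integral_congr (g := fun ε =>
      (ε * Real.sqrt ((10 + Real.sqrt 2)/8 - ε)) / Real.sqrt (2 + Real.sqrt 2)
        + (3/4 * Real.sqrt 2 - 1) * ε) (fun x _ => by ring),
    intervalIntegral.integral_add
      (f := fun ε => (ε * Real.sqrt ((10 + Real.sqrt 2)/8 - ε)) / Real.sqrt (2 + Real.sqrt 2))
      (g := fun ε => (3/4 * Real.sqrt 2 - 1) * ε)
      (((continuous_id'.mul (contS _)).div_const _).intervalIntegrable _ _)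
      ((continuous_const.mul continuous_id :
        Continuous fun x : ℝ => (3/4 * Real.sqrt 2 - 1) * x).intervalIntegrable _ _),
    intervalIntegral.integral_const_mul, integral_id,
    intervalIntegral.integral_div, sqrtInt1, div_t_1, hq1, hqr]
  linear_combination (-(25:ℝ)/24 + 317/480 * Real.sqrt 2) * hr2

private lemma P32 : (∫ ε in (1:ℝ)..(Real.sqrt 2),
      ε^2 * (Real.sqrt ((10 + Real.sqrt 2)/8 - ε) / Real.sqrt (2 + Real.sqrt 2) + 3/4 * Real.sqrt 2 - 1))
    = 4063/1680 - 533/336 * Real.sqrt 2 := by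
  rw [intervalIntegral.integral_congr (g := fun ε =>
      (ε^2 * Real.sqrt ((10 + Real.sqrt 2)/8 - ε)) / Real.sqrt (2 + Real.sqrt 2)
        + (3/4 * Real.sqrt 2 - 1) * ε^2) (fun x _ => by ring),
    intervalIntegral.integral_add
      (f := fun ε => (ε^2 * Real.sqrt ((10 + Real.sqrt 2)/8 - ε)) / Real.sqrt (2 + Real.sqrt 2))
      (g := fun ε => (3/4 * Real.sqrt 2 - 1) * ε^2)
      ((((continuous_pow 2).mul (contS _)).div_const _).intervalIntegrable _ _)
      ((continuous_const.mul (continuous_pow 2) :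
        Continuous fun x : ℝ => (3/4 * Real.sqrt 2 - 1) * x^2).intervalIntegrable _ _),
    intervalIntegral.integral_const_mul, integral_pow,
    intervalIntegral.integral_div, sqrtInt2, div_t_2, hq1, hqr]
  push_cast
  linear_combination ((143:ℝ)/160 - 461/672 * Real.sqrt 2 + 3077/6720 * Real.sqrt 2^2) * hr2

private lemma P40 : (∫ ε in (Real.sqrt 2)..((10 + Real.sqrt 2)/8),
      Real.sqrt (4 - 2 * Real.sqrt 2) * Real.sqrt ((10 + Real.sqrt 2)/8 - ε))
    = -41/12 + 29/12 * Real.sqrt 2 := by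
  rw [intervalIntegral.integral_const_mul, sqrtInt0, mul_w_0, hwr]
  linear_combination (-(7:ℝ)/8) * hr2

private lemma P41 : (∫ ε in (Real.sqrt 2)..((10 + Real.sqrt 2)/8),
      ε * (Real.sqrt (4 - 2 * Real.sqrt 2) * Real.sqrt ((10 + Real.sqrt 2)/8 - ε)))
    = 43/30 - 81/80 * Real.sqrt 2 := by
  rw [intervalIntegral.integral_congr (g := fun ε =>
      Real.sqrt (4 - 2 * Real.sqrt 2) * (ε * Real.sqrt ((10 + Real.sqrt 2)/8 - ε)))
      (fun x _ => by ring),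
    intervalIntegral.integral_const_mul, sqrtInt1, mul_w_1, hwr]
  linear_combination ((17:ℝ)/15 - 91/160 * Real.sqrt 2) * hr2

private lemma P42 : (∫ ε in (Real.sqrt 2)..((10 + Real.sqrt 2)/8),
      ε^2 * (Real.sqrt (4 - 2 * Real.sqrt 2) * Real.sqrt ((10 + Real.sqrt 2)/8 - ε)))
    = -3443/1680 + 2437/1680 * Real.sqrt 2 := by
  rw [intervalIntegral.integral_congr (g := fun ε =>
      Real.sqrt (4 - 2 * Real.sqrt 2) * (ε^2 * Real.sqrt ((10 + Real.sqrt 2)/8 - ε)))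
      (fun x _ => by ring),
    intervalIntegral.integral_const_mul, sqrtInt2, mul_w_2, hwr]
  linear_combination (-(349:ℝ)/480 + 341/480 * Real.sqrt 2 - 133/320 * Real.sqrt 2^2) * hr2

private lemma hle1 : -1 - Real.sqrt 2 ≤ (0:ℝ) := by linarith [hr0]
private lemma hle2 : (0:ℝ) ≤ 1 := zero_le_one
private lemma hle3 : (1:ℝ) ≤ Real.sqrt 2 := hr_ge1
private lemma hle4 : Real.sqrt 2 ≤ (10 + Real.sqrt 2)/8 := by
  nlinarith [hr2, hr0, sq_nonneg (Real.sqrt 2 - 10/7)]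

end dosAux

/-- the density of states `D` is normalized, its mean energy vanishes, and its
second energy moment equals `(3+√2)/6` (the high-temperature specific heat coefficient). -/
theorem dos_moments :
    (∫ ε in (-1 - Real.sqrt 2)..((10 + Real.sqrt 2) / 8), dosStandard ε) = 1 ∧
    (∫ ε in (-1 - Real.sqrt 2)..((10 + Real.sqrt 2) / 8), ε * dosStandard ε) = 0 ∧
    (∫ ε in (-1 - Real.sqrt 2)..((10 + Real.sqrt 2) / 8), ε ^ 2 * dosStandard ε)
      = (3 + Real.sqrt 2) / 6 := by
  have hg1 : Continuous fun ε : ℝ => 3/4 * Real.sqrt 2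
      - Real.sqrt ((10 + Real.sqrt 2)/8 - ε) / Real.sqrt (2 + Real.sqrt 2) :=
    continuous_const.sub ((contS _).div_const _)
  have hg2 : Continuous fun _ε : ℝ => Real.sqrt 2 - 1 := continuous_const
  have hg3 : Continuous fun ε : ℝ =>
      Real.sqrt ((10 + Real.sqrt 2)/8 - ε) / Real.sqrt (2 + Real.sqrt 2)
        + 3/4 * Real.sqrt 2 - 1 :=
    (((contS _).div_const _).add continuous_const).sub continuous_const
  have hg4 : Continuous fun ε : ℝ =>
      Real.sqrt (4 - 2 * Real.sqrt 2) * Real.sqrt ((10 + Real.sqrt 2)/8 - ε) :=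
    continuous_const.mul (contS _)
  refine ⟨?_, ?_, ?_⟩
  · have i1 := piece_integrable hle1 hg1 hEq1
    have i2 := piece_integrable hle2 hg2 hEq2
    have i3 := piece_integrable hle3 hg3 hEq3
    have i4 := piece_integrable hle4 hg4 hEq4
    rw [← intervalIntegral.integral_add_adjacent_intervals i1 (i2.trans (i3.trans i4)),
      ← intervalIntegral.integral_add_adjacent_intervals i2 (i3.trans i4),
      ← intervalIntegral.integral_add_adjacent_intervals i3 i4,
      piece_congr hle1 hEq1, piece_congr hle2 hEq2, piece_congr hle3 hEq3,
      piece_congr hle4 hEq4, P10, P20, P30, P40]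
    ring
  · have e1 : ∀ x ∈ Set.Ioc (-1 - Real.sqrt 2) (0:ℝ), x * dosStandard x
        = x * (3/4 * Real.sqrt 2
          - Real.sqrt ((10 + Real.sqrt 2)/8 - x) / Real.sqrt (2 + Real.sqrt 2)) :=
      fun x hx => by rw [hEq1 x hx]
    have e2 : ∀ x ∈ Set.Ioc (0:ℝ) 1, x * dosStandard x = x * (Real.sqrt 2 - 1) :=
      fun x hx => by rw [hEq2 x hx]
    have e3 : ∀ x ∈ Set.Ioc (1:ℝ) (Real.sqrt 2), x * dosStandard x
        = x * (Real.sqrt ((10 + Real.sqrt 2)/8 - x) / Real.sqrt (2 + Real.sqrt 2)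
          + 3/4 * Real.sqrt 2 - 1) :=
      fun x hx => by rw [hEq3 x hx]
    have e4 : ∀ x ∈ Set.Ioc (Real.sqrt 2) ((10 + Real.sqrt 2)/8), x * dosStandard x
        = x * (Real.sqrt (4 - 2 * Real.sqrt 2) * Real.sqrt ((10 + Real.sqrt 2)/8 - x)) :=
      fun x hx => by rw [hEq4 x hx]
    have i1 := piece_integrable hle1 (continuous_id'.mul hg1) e1
    have i2 := piece_integrable hle2 (continuous_id'.mul hg2) e2
    have i3 := piece_integrable hle3 (continuous_id'.mul hg3) e3
    have i4 := piece_integrable hle4 (continuous_id'.mul hg4) e4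
    rw [← intervalIntegral.integral_add_adjacent_intervals i1 (i2.trans (i3.trans i4)),
      ← intervalIntegral.integral_add_adjacent_intervals i2 (i3.trans i4),
      ← intervalIntegral.integral_add_adjacent_intervals i3 i4,
      piece_congr hle1 e1, piece_congr hle2 e2, piece_congr hle3 e3,
      piece_congr hle4 e4, P11, P21, P31, P41]
    ring
  · have e1 : ∀ x ∈ Set.Ioc (-1 - Real.sqrt 2) (0:ℝ), x^2 * dosStandard x
        = x^2 * (3/4 * Real.sqrt 2
          - Real.sqrt ((10 + Real.sqrt 2)/8 - x) / Real.sqrt (2 + Real.sqrt 2)) :=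
      fun x hx => by rw [hEq1 x hx]
    have e2 : ∀ x ∈ Set.Ioc (0:ℝ) 1, x^2 * dosStandard x = x^2 * (Real.sqrt 2 - 1) :=
      fun x hx => by rw [hEq2 x hx]
    have e3 : ∀ x ∈ Set.Ioc (1:ℝ) (Real.sqrt 2), x^2 * dosStandard x
        = x^2 * (Real.sqrt ((10 + Real.sqrt 2)/8 - x) / Real.sqrt (2 + Real.sqrt 2)
          + 3/4 * Real.sqrt 2 - 1) :=
      fun x hx => by rw [hEq3 x hx]
    have e4 : ∀ x ∈ Set.Ioc (Real.sqrt 2) ((10 + Real.sqrt 2)/8), x^2 * dosStandard x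
        = x^2 * (Real.sqrt (4 - 2 * Real.sqrt 2) * Real.sqrt ((10 + Real.sqrt 2)/8 - x)) :=
      fun x hx => by rw [hEq4 x hx]
    have i1 := piece_integrable hle1 ((continuous_pow 2).mul hg1) e1
    have i2 := piece_integrable hle2 ((continuous_pow 2).mul hg2) e2
    have i3 := piece_integrable hle3 ((continuous_pow 2).mul hg3) e3
    have i4 := piece_integrable hle4 ((continuous_pow 2).mul hg4) e4
    rw [← intervalIntegral.integral_add_adjacent_intervals i1 (i2.trans (i3.trans i4)),
      ← intervalIntegral.integral_add_adjacent_intervals i2 (i3.trans i4),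
      ← intervalIntegral.integral_add_adjacent_intervals i3 i4,
      piece_congr hle1 e1, piece_congr hle2 e2, piece_congr hle3 e3,
      piece_congr hle4 e4, P12, P22, P32, P42]
    ring
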